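/- Let p be a prime, s ≥ 2, and let (e₁, …, e_s) be a basis of the elementary abelian group G = C_p^s (each e_i of order p). Set e₀ = e₁ + … + e_s and G₀ = {e₀, e₁, …, e_s}. Then Δ(G₀) = {s − 1}. Consequently, for every finite abelian group G with r(G) ≥ 2, the interval [1, r(G) − 1] is contained in Δ*(G). -/

import Mathlib

open Multiset

section Defs

variable {G : Type*} [AddCommGroup G]

/-- `S` is a zero-sum sequence over `G₀`: a multiset with entries in `G₀` and sum `0`. -/
def IsZeroSumSeq (G₀ : Set G) (S : Multiset G) : Prop :=
  (∀ x ∈ S, x ∈ G₀) ∧ S.sum = 0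

/-- `S` is an atom over `G₀`: a nonempty zero-sum sequence over `G₀` that is not the
union of two nonempty zero-sum sequences over `G₀`. -/
def IsAtomSeq (G₀ : Set G) (S : Multiset G) : Prop :=
  IsZeroSumSeq G₀ S ∧ S ≠ 0 ∧
    ∀ A B : Multiset G, IsZeroSumSeq G₀ A → IsZeroSumSeq G₀ B →
      A ≠ 0 → B ≠ 0 → S ≠ A + B

/-- The set of lengths of `B`: all `k` such that `B` is a union of `k` atoms over `G₀`. -/
def LengthSet (G₀ : Set G) (B : Multiset G) : Set ℕ :=
  {k | ∃ l : Multiset (Multiset G), Multiset.card l = k ∧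
      (∀ A ∈ l, IsAtomSeq G₀ A) ∧ l.sum = B}

/-- The set of successive distances of a set of naturals. -/
def DeltaOf (L : Set ℕ) : Set ℕ :=
  {d | ∃ x ∈ L, ∃ y ∈ L, x < y ∧ y - x = d ∧ ∀ z ∈ L, ¬(x < z ∧ z < y)}

/-- The set of distances `Δ(G₀)`. -/
def DeltaSet (G₀ : Set G) : Set ℕ :=
  {d | ∃ B : Multiset G, IsZeroSumSeq G₀ B ∧ B ≠ 0 ∧ d ∈ DeltaOf (LengthSet G₀ B)}

/-- `G₀` is half-factorial if `Δ(G₀) = ∅`. -/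
def IsHalfFactorialSet (G₀ : Set G) : Prop := DeltaSet G₀ = ∅

/-- `G₀` is minimal non-half-factorial if `Δ(G₀) ≠ ∅` and every proper subset is
half-factorial. -/
def IsMinNonHalfFactorial (G₀ : Set G) : Prop :=
  (DeltaSet G₀).Nonempty ∧ ∀ G₁ : Set G, G₁ ⊂ G₀ → DeltaSet G₁ = ∅

/-- The cross number `k(S) = Σ 1/ord(g)` of a multiset over `G`. -/
noncomputable def crossNumber (S : Multiset G) : ℚ :=
  (S.map (fun g => ((addOrderOf g : ℚ))⁻¹)).sum

/-- `G₀` is an LCN-set if every atom over `G₀` has cross number at least 1. -/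
def IsLCNSet (G₀ : Set G) : Prop :=
  ∀ U : Multiset G, IsAtomSeq G₀ U → 1 ≤ crossNumber U

/-- A subset of `G \ {0}` is independent if any integral linear relation on its elements
has all summands zero. -/
def IsIndependentSet (E : Set G) : Prop :=
  (0 : G) ∉ E ∧ ∀ s : Finset G, ↑s ⊆ E → ∀ f : G → ℤ,
    (∑ e ∈ s, f e • e) = 0 → ∀ e ∈ s, f e • e = 0

/-- `d` is a greatest common divisor of the set `S` of naturals. -/
def IsSetGcd (S : Set ℕ) (d : ℕ) : Prop :=
  (∀ s ∈ S, d ∣ s) ∧ ∀ e : ℕ, (∀ s ∈ S, e ∣ s) → e ∣ d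

end Defs

/-- The set of minimal distances `Δ*(G)`. -/
def DeltaStar (G : Type*) [AddCommGroup G] : Set ℕ :=
  {d | ∃ G₀ : Set G, (DeltaSet G₀).Nonempty ∧ d = sInf (DeltaSet G₀)}

/-- The `p`-rank of a finite abelian group: `log_p` of the order of the `p`-torsion
subgroup `{x | p • x = 0}`. -/
noncomputable def pRank (G : Type*) [AddCommGroup G] (p : ℕ) : ℕ :=
  Nat.log p (Nat.card {x : G // p • x = 0})

/-- The rank of a finite abelian group: the maximum of the `p`-ranks over all primes. -/
noncomputable def rankG (G : Type*) [AddCommGroup G] : ℕ :=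
  sSup {r : ℕ | ∃ p : ℕ, p.Prime ∧ r = pRank G p}

namespace S3
set_option linter.unusedSectionVars false

variable {G : Type*} [AddCommGroup G] [DecidableEq G] {p s : ℕ} {e : Fin s → G}

/-- The canonical multiset with `a` copies of `e₀ = ∑ i, e i` and `b i` copies of `e i`. -/
def msab (e : Fin s → G) (a : ℕ) (b : Fin s → ℕ) : Multiset G :=
  Multiset.replicate a (∑ i, e i) + ∑ i, Multiset.replicate (b i) (e i)

section basic

variable (hp : p.Prime) (hs : 2 ≤ s)
  (hord : ∀ i, addOrderOf (e i) = p)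
  (hindep : ∀ f : Fin s → ℤ, (∑ i, f i • e i) = 0 → ∀ i, f i • e i = 0)

include hp hord in
lemma e_ne_zero (i : Fin s) : e i ≠ 0 := by
  intro h
  have := hord i
  rw [h, addOrderOf_zero] at this
  exact hp.ne_one this.symm

include hp hord hindep in
lemma e_inj : Function.Injective e := by
  intro i j hij
  by_contra hne
  have hsum : (∑ k, (if k = i then (1:ℤ) else if k = j then -1 else 0) • e k) = 0 := by
    have : ∀ k ∈ Finset.univ, (if k = i then (1:ℤ) else if k = j then -1 else 0) • e k
        = (if k = i then e k else 0) + (if k = j then -e k else 0) := by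
      intro k _
      by_cases h1 : k = i
      · subst h1; simp [hne]
      · by_cases h2 : k = j
        · subst h2; simp [h1]
        · simp [h1, h2]
    rw [Finset.sum_congr rfl this, Finset.sum_add_distrib]
    simp [Finset.sum_ite_eq', hij]
  have := hindep _ hsum i
  simp at this
  exact e_ne_zero hp hord i this

include hp hs hord hindep in
lemma e0_ne (i : Fin s) : (∑ k, e k) ≠ e i := by
  intro h
  have hsum : (∑ k, (if k = i then (0:ℤ) else 1) • e k) = 0 := by
    have : ∀ k ∈ Finset.univ, (if k = i then (0:ℤ) else 1) • e k
        = e k - (if k = i then e k else 0) := by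
      intro k _
      by_cases h1 : k = i <;> simp [h1]
    rw [Finset.sum_congr rfl this, Finset.sum_sub_distrib]
    simp [Finset.sum_ite_eq', ← h]
  obtain ⟨j, hj⟩ : ∃ j : Fin s, j ≠ i := by
    by_cases h : i = ⟨0, by omega⟩
    · exact ⟨⟨1, by omega⟩, by simp [h, Fin.ext_iff]⟩
    · exact ⟨⟨0, by omega⟩, fun hji => h hji.symm⟩
  have := hindep _ hsum j
  simp [hj] at this
  exact e_ne_zero hp hord j this

include hp hs hord hindep in
lemma count_msab_e0 (a : ℕ) (b : Fin s → ℕ) :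
    count (∑ i, e i) (msab e a b) = a := by
  unfold msab
  rw [count_add, count_replicate, if_pos rfl]
  have : ∀ i ∈ Finset.univ, count (∑ k, e k) (Multiset.replicate (b i) (e i)) = 0 := by
    intro i _
    rw [count_replicate, if_neg]
    exact fun h => e0_ne hp hs hord hindep i h.symm
  rw [show count (∑ i, e i) (∑ i, Multiset.replicate (b i) (e i))
      = ∑ i, count (∑ k, e k) (Multiset.replicate (b i) (e i)) from
      map_sum (Multiset.countAddMonoidHom _) _ _]
  rw [Finset.sum_congr rfl this]
  simp

include hp hs hord hindep in
lemma count_msab_e (a : ℕ) (b : Fin s → ℕ) (j : Fin s) :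
    count (e j) (msab e a b) = b j := by
  unfold msab
  rw [count_add, count_replicate, if_neg (e0_ne hp hs hord hindep j)]
  rw [show count (e j) (∑ i, Multiset.replicate (b i) (e i))
      = ∑ i, count (e j) (Multiset.replicate (b i) (e i)) from
      map_sum (Multiset.countAddMonoidHom _) _ _]
  have : ∀ i ∈ Finset.univ, count (e j) (Multiset.replicate (b i) (e i))
      = if i = j then b i else 0 := by
    intro i _
    rw [count_replicate]
    congr 1
    simp only [eq_iff_iff]
    exact ⟨fun h => e_inj hp hord hindep h, fun h => h ▸ rfl⟩
  rw [Finset.sum_congr rfl this]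
  simp

lemma mem_msab {a : ℕ} {b : Fin s → ℕ} {x : G} (hx : x ∈ msab e a b) :
    x ∈ ({∑ i, e i} ∪ Set.range e : Set G) := by
  unfold msab at hx
  rw [Multiset.mem_add] at hx
  rcases hx with hx | hx
  · left; exact Multiset.eq_of_mem_replicate hx
  · right
    rw [Multiset.mem_sum] at hx
    obtain ⟨i, _, hi⟩ := hx
    exact ⟨i, (Multiset.eq_of_mem_replicate hi).symm⟩

include hp hs hord hindep in
lemma eq_msab {S : Multiset G} (hS : ∀ x ∈ S, x ∈ ({∑ i, e i} ∪ Set.range e : Set G)) :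
    S = msab e (count (∑ i, e i) S) (fun i => count (e i) S) := by
  ext x
  by_cases hx : x ∈ ({∑ i, e i} ∪ Set.range e : Set G)
  · rcases hx with hx | ⟨i, rfl⟩
    · rw [Set.mem_singleton_iff] at hx
      subst hx
      rw [count_msab_e0 hp hs hord hindep]
    · rw [count_msab_e hp hs hord hindep]
  · rw [count_eq_zero.2 (fun h => hx (hS x h)),
      count_eq_zero.2 (fun h => hx (mem_msab h))]

lemma msab_add (a a' : ℕ) (b b' : Fin s → ℕ) :
    msab e a b + msab e a' b' = msab e (a + a') (b + b') := by
  unfold msab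
  rw [Multiset.replicate_add]
  simp only [Pi.add_apply, Multiset.replicate_add, Finset.sum_add_distrib]
  abel

lemma msab_zero : msab e 0 (fun _ => 0) = 0 := by
  unfold msab; simp

include hp hs hord hindep in
lemma msab_inj {a a' : ℕ} {b b' : Fin s → ℕ} (h : msab e a b = msab e a' b') :
    a = a' ∧ b = b' := by
  constructor
  · rw [← count_msab_e0 hp hs hord hindep a b, h, count_msab_e0 hp hs hord hindep]
  · funext i
    rw [← count_msab_e hp hs hord hindep a b i, h, count_msab_e hp hs hord hindep]

include hp hs hord hindep in
lemma msab_eq_zero_iff {a : ℕ} {b : Fin s → ℕ} :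
    msab e a b = 0 ↔ a = 0 ∧ ∀ i, b i = 0 := by
  constructor
  · intro h
    rw [show (0 : Multiset G) = msab e 0 (fun _ => 0) from msab_zero.symm] at h
    obtain ⟨h1, h2⟩ := msab_inj hp hs hord hindep h
    exact ⟨h1, fun i => congrFun h2 i⟩
  · rintro ⟨rfl, hb⟩
    have : b = fun _ => 0 := funext hb
    rw [this, msab_zero]

lemma msab_sum_eq (a : ℕ) (b : Fin s → ℕ) :
    (msab e a b).sum = ∑ i, (a + b i) • e i := by
  unfold msab
  rw [Multiset.sum_add, Multiset.sum_replicate, Multiset.sum_sum]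
  simp only [Multiset.sum_replicate]
  rw [Finset.smul_sum, ← Finset.sum_add_distrib]
  exact Finset.sum_congr rfl fun i _ => (add_smul a (b i) (e i)).symm

include hp hord hindep in
lemma msab_sum_zero_iff {a : ℕ} {b : Fin s → ℕ} :
    (msab e a b).sum = 0 ↔ ∀ i, p ∣ a + b i := by
  rw [msab_sum_eq]
  constructor
  · intro h i
    have h' : (∑ i, ((a + b i : ℕ) : ℤ) • e i) = 0 := by
      rw [← h]
      exact Finset.sum_congr rfl fun i _ => natCast_zsmul (e i) (a + b i)
    have := hindep _ h' i
    rw [natCast_zsmul] at this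
    rw [← hord i]
    exact addOrderOf_dvd_iff_nsmul_eq_zero.2 this
  · intro h
    have : ∀ i ∈ Finset.univ, (a + b i) • e i = 0 := by
      intro i _
      exact addOrderOf_dvd_iff_nsmul_eq_zero.1 (hord i ▸ h i)
    rw [Finset.sum_congr rfl this]
    simp

include hp hs hord hindep in
lemma isZeroSum_msab_iff {a : ℕ} {b : Fin s → ℕ} :
    IsZeroSumSeq ({∑ i, e i} ∪ Set.range e : Set G) (msab e a b) ↔ ∀ i, p ∣ a + b i := by
  constructor
  · intro ⟨_, h⟩
    exact (msab_sum_zero_iff hp hord hindep).1 h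
  · intro h
    exact ⟨fun x hx => mem_msab hx, (msab_sum_zero_iff hp hord hindep).2 h⟩

end basic

section atoms

variable (hp : p.Prime) (hs : 2 ≤ s)
  (hord : ∀ i, addOrderOf (e i) = p)
  (hindep : ∀ f : Fin s → ℤ, (∑ i, f i • e i) = 0 → ∀ i, f i • e i = 0)

lemma dvd_le_cases {p x : ℕ} (hd : p ∣ x) (hle : x ≤ p) : x = 0 ∨ x = p := by
  rcases hd with ⟨c, rfl⟩
  rcases Nat.eq_zero_or_pos c with rfl | hc
  · left; simp
  · right
    exact le_antisymm hle (Nat.le_mul_of_pos_right p hc)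

lemma msab_congr {a a' : ℕ} {b b' : Fin s → ℕ} (ha : a = a') (hb : ∀ i, b i = b' i) :
    msab e a b = msab e a' b' := by
  subst ha
  rw [funext hb]

include hp hs hord hindep in
lemma decomp {a : ℕ} {b : Fin s → ℕ} {A B : Multiset G}
    (hA : ∀ x ∈ A, x ∈ ({∑ i, e i} ∪ Set.range e : Set G))
    (hB : ∀ x ∈ B, x ∈ ({∑ i, e i} ∪ Set.range e : Set G))
    (h : msab e a b = A + B) :
    ∃ a₁ a₂ b₁ b₂, A = msab e a₁ b₁ ∧ B = msab e a₂ b₂ ∧ a₁ + a₂ = a ∧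
      ∀ i, b₁ i + b₂ i = b i := by
  have hA' := eq_msab hp hs hord hindep hA
  have hB' := eq_msab hp hs hord hindep hB
  have key : msab e a b = msab e (count (∑ i, e i) A + count (∑ i, e i) B)
      ((fun i => count (e i) A) + (fun i => count (e i) B)) := by
    rw [← msab_add, ← hA', ← hB']
    exact h
  obtain ⟨h1, h2⟩ := msab_inj hp hs hord hindep key
  exact ⟨_, _, _, _, hA', hB', h1.symm, fun i => (congrFun h2 i).symm⟩

include hp hs hord hindep in
lemma atom_U0 : IsAtomSeq ({∑ i, e i} ∪ Set.range e : Set G) (msab e p (fun _ => 0)) := by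
  refine ⟨(isZeroSum_msab_iff hp hs hord hindep).2 (fun i => by simp), ?_, ?_⟩
  · intro h
    exact hp.pos.ne' ((msab_eq_zero_iff hp hs hord hindep).1 h).1
  · intro A B hA hB hA0 hB0 heq
    obtain ⟨a₁, a₂, b₁, b₂, rfl, rfl, ha, hb⟩ :=
      decomp hp hs hord hindep hA.1 hB.1 heq
    have hdvd1 := (isZeroSum_msab_iff hp hs hord hindep).1 hA
    have i₀ : Fin s := ⟨0, by omega⟩
    have hb' : ∀ j, b₁ j + b₂ j = 0 := fun j => hb j
    have hb1 : ∀ j, b₁ j = 0 := fun j => by have := hb' j; omega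
    have hb2 : ∀ j, b₂ j = 0 := fun j => by have := hb' j; omega
    have hd : p ∣ a₁ := by have := hdvd1 i₀; rwa [hb1 i₀, Nat.add_zero] at this
    rcases dvd_le_cases hd (by omega) with h0 | h0
    · exact hA0 ((msab_eq_zero_iff hp hs hord hindep).2 ⟨h0, hb1⟩)
    · exact hB0 ((msab_eq_zero_iff hp hs hord hindep).2 ⟨by omega, hb2⟩)

include hp hs hord hindep in
lemma atom_Ui (i : Fin s) :
    IsAtomSeq ({∑ i, e i} ∪ Set.range e : Set G) (msab e 0 (fun j => if j = i then p else 0)) := by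
  refine ⟨(isZeroSum_msab_iff hp hs hord hindep).2
      (fun j => by by_cases h : j = i <;> simp [h]), ?_, ?_⟩
  · intro h
    have := ((msab_eq_zero_iff hp hs hord hindep).1 h).2 i
    simp at this
    exact hp.pos.ne' this
  · intro A B hA hB hA0 hB0 heq
    obtain ⟨a₁, a₂, b₁, b₂, rfl, rfl, ha, hb⟩ :=
      decomp hp hs hord hindep hA.1 hB.1 heq
    have hdvd1 := (isZeroSum_msab_iff hp hs hord hindep).1 hA
    have ha₁ : a₁ = 0 := by omega
    have hdvd1' : ∀ j, p ∣ b₁ j := by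
      intro j; have := hdvd1 j; rwa [ha₁, Nat.zero_add] at this
    have hb' : ∀ j, b₁ j + b₂ j = if j = i then p else 0 := fun j => hb j
    have hbne : ∀ j, j ≠ i → b₁ j = 0 ∧ b₂ j = 0 := by
      intro j hj
      have := hb' j
      rw [if_neg hj] at this
      omega
    have hbi : b₁ i + b₂ i = p := by have := hb' i; rwa [if_pos rfl] at this
    rcases dvd_le_cases (hdvd1' i) (by omega) with h0 | h0
    · refine hA0 ((msab_eq_zero_iff hp hs hord hindep).2 ⟨ha₁, fun j => ?_⟩)
      by_cases hj : j = i
      · rw [hj, h0]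
      · exact (hbne j hj).1
    · refine hB0 ((msab_eq_zero_iff hp hs hord hindep).2 ⟨by omega, fun j => ?_⟩)
      by_cases hj : j = i
      · rw [hj]; omega
      · exact (hbne j hj).2

include hp hs hord hindep in
lemma atom_V (j k : ℕ) (hj : 1 ≤ j) (hk : 1 ≤ k) (hjk : j + k = p) :
    IsAtomSeq ({∑ i, e i} ∪ Set.range e : Set G) (msab e j (fun _ => k)) := by
  refine ⟨(isZeroSum_msab_iff hp hs hord hindep).2 (fun i => by rw [hjk]), ?_, ?_⟩
  · intro h
    exact absurd ((msab_eq_zero_iff hp hs hord hindep).1 h).1 (by omega)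
  · intro A B hA hB hA0 hB0 heq
    obtain ⟨a₁, a₂, b₁, b₂, rfl, rfl, ha, hb⟩ :=
      decomp hp hs hord hindep hA.1 hB.1 heq
    have hdvd1 := (isZeroSum_msab_iff hp hs hord hindep).1 hA
    have hb' : ∀ i, b₁ i + b₂ i = k := fun i => hb i
    rcases Nat.eq_zero_or_pos a₁ with ha₁ | ha₁
    · refine hA0 ((msab_eq_zero_iff hp hs hord hindep).2 ⟨ha₁, fun i => ?_⟩)
      have hd : p ∣ b₁ i := by have := hdvd1 i; rwa [ha₁, Nat.zero_add] at this
      rcases dvd_le_cases hd (by have := hb' i; omega) with h1 | h1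
      · exact h1
      · have := hb' i; omega
    · have hfull : ∀ i, a₁ + b₁ i = p := by
        intro i
        have hle : a₁ + b₁ i ≤ p := by have := hb' i; omega
        exact le_antisymm hle (Nat.le_of_dvd (by omega) (hdvd1 i))
      refine hB0 ((msab_eq_zero_iff hp hs hord hindep).2 ⟨?_, fun i => ?_⟩)
      · have i₀ : Fin s := ⟨0, by omega⟩
        have := hfull i₀
        have := hb' i₀
        omega
      · have := hfull i
        have := hb' i
        omega

include hp hs hord hindep in
lemma atom_classify {S : Multiset G} (hS : IsAtomSeq ({∑ i, e i} ∪ Set.range e : Set G) S) :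
    (S = msab e p (fun _ => 0)) ∨ (∃ i, S = msab e 0 (fun j => if j = i then p else 0)) ∨
    (∃ j k, 1 ≤ j ∧ 1 ≤ k ∧ j + k = p ∧ S = msab e j (fun _ => k)) := by
  obtain ⟨⟨hmem, hsum⟩, hne, hsplit⟩ := hS
  have hrepr := eq_msab hp hs hord hindep hmem
  set a := count (∑ i, e i) S with ha_def
  set b := (fun i => count (e i) S) with hb_def
  have hdvd : ∀ i, p ∣ a + b i := by
    refine (msab_sum_zero_iff hp hord hindep).1 ?_
    rw [← hrepr]; exact hsum
  rcases Nat.eq_zero_or_pos a with ha0 | ha1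
  · -- case a = 0
    have hdvd' : ∀ i, p ∣ b i := fun i => by have := hdvd i; rwa [ha0, Nat.zero_add] at this
    have hex : ∃ i, b i ≠ 0 := by
      by_contra hall
      push_neg at hall
      exact hne (hrepr.trans ((msab_eq_zero_iff hp hs hord hindep).2 ⟨ha0, hall⟩))
    obtain ⟨i₀, hi₀⟩ := hex
    have hpi₀ : p ≤ b i₀ := Nat.le_of_dvd (by omega) (hdvd' i₀)
    have hSsplit : S = msab e 0 (fun j => if j = i₀ then p else 0)
        + msab e 0 (fun j => b j - (if j = i₀ then p else 0)) := by
      rw [msab_add]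
      refine hrepr.trans (msab_congr (by omega) (fun j => ?_))
      show b j = (if j = i₀ then p else 0) + (b j - (if j = i₀ then p else 0))
      split_ifs with hj
      · subst hj; omega
      · omega
    have hz2 : IsZeroSumSeq ({∑ i, e i} ∪ Set.range e : Set G)
        (msab e 0 (fun j => b j - (if j = i₀ then p else 0))) := by
      refine (isZeroSum_msab_iff hp hs hord hindep).2 (fun j => ?_)
      show p ∣ 0 + (b j - (if j = i₀ then p else 0))
      rw [Nat.zero_add]
      exact Nat.dvd_sub (hdvd' j) (by by_cases hj : j = i₀ <;> simp [hj])
    have hz1 := (atom_Ui hp hs hord hindep i₀).1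
    have hne1 := (atom_Ui hp hs hord hindep i₀).2.1
    by_cases hz20 : msab e 0 (fun j => b j - (if j = i₀ then p else 0)) = 0
    · right; left
      exact ⟨i₀, by rw [hSsplit, hz20, add_zero]⟩
    · exact absurd hSsplit (hsplit _ _ hz1 hz2 hne1 hz20)
  · rcases Nat.lt_or_ge a p with hap | hap
    · -- case 1 ≤ a < p : V case
      have hbk : ∀ i, p - a ≤ b i := by
        intro i
        have := Nat.le_of_dvd (by omega) (hdvd i)
        omega
      have hSsplit : S = msab e a (fun _ => p - a) + msab e 0 (fun j => b j - (p - a)) := by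
        rw [msab_add]
        refine hrepr.trans (msab_congr (by omega) (fun j => ?_))
        show b j = (p - a) + (b j - (p - a))
        have := hbk j
        omega
      have hz1 := (atom_V hp hs hord hindep a (p - a) (by omega) (by omega) (by omega)).1
      have hne1 := (atom_V hp hs hord hindep a (p - a) (by omega) (by omega) (by omega)).2.1
      have hz2 : IsZeroSumSeq ({∑ i, e i} ∪ Set.range e : Set G)
          (msab e 0 (fun j => b j - (p - a))) := by
        refine (isZeroSum_msab_iff hp hs hord hindep).2 (fun j => ?_)
        show p ∣ 0 + (b j - (p - a))
        rw [Nat.zero_add, show b j - (p - a) = (a + b j) - p by omega]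
        exact Nat.dvd_sub (hdvd j) dvd_rfl
      by_cases hz20 : msab e 0 (fun j => b j - (p - a)) = 0
      · right; right
        exact ⟨a, p - a, by omega, by omega, by omega, by rw [hSsplit, hz20, add_zero]⟩
      · exact absurd hSsplit (hsplit _ _ hz1 hz2 hne1 hz20)
    · -- case p ≤ a : U0 case
      have hSsplit : S = msab e p (fun _ => 0) + msab e (a - p) b := by
        rw [msab_add]
        exact hrepr.trans (msab_congr (by omega) (fun j => by simp))
      have hz1 := (atom_U0 hp hs hord hindep).1
      have hne1 := (atom_U0 hp hs hord hindep).2.1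
      have hz2 : IsZeroSumSeq ({∑ i, e i} ∪ Set.range e : Set G) (msab e (a - p) b) := by
        refine (isZeroSum_msab_iff hp hs hord hindep).2 (fun j => ?_)
        rw [show (a - p) + b j = (a + b j) - p by omega]
        exact Nat.dvd_sub (hdvd j) dvd_rfl
      by_cases hz20 : msab e (a - p) b = 0
      · left
        obtain ⟨hz1', hz2'⟩ := (msab_eq_zero_iff hp hs hord hindep).1 hz20
        rw [hSsplit, hz20, add_zero]
      · exact absurd hSsplit (hsplit _ _ hz1 hz2 hne1 hz20)

end atoms

section factorizations

variable (hp : p.Prime) (hs : 2 ≤ s)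
  (hord : ∀ i, addOrderOf (e i) = p)
  (hindep : ∀ f : Fin s → ℤ, (∑ i, f i • e i) = 0 → ∀ i, f i • e i = 0)

lemma card_finsum {ι α : Type*} (t : Finset ι) (f : ι → Multiset α) :
    Multiset.card (∑ i ∈ t, f i) = ∑ i ∈ t, Multiset.card (f i) := by
  classical
  induction t using Finset.induction with
  | empty => simp
  | insert _ _ h ih => rw [Finset.sum_insert h, Finset.sum_insert h, Multiset.card_add, ih]

lemma msab_rep (n α : ℕ) (β : Fin s → ℕ) :
    (Multiset.replicate n (msab e α β)).sum = msab e (n * α) (fun j => n * β j) := by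
  induction n with
  | zero =>
    simp only [Multiset.replicate_zero, Multiset.sum_zero, Nat.zero_mul]
    exact (msab_zero).symm
  | succ n ih =>
    rw [Multiset.replicate_succ, Multiset.sum_cons, ih, msab_add]
    exact msab_congr (by ring) (fun j => by show β j + n * β j = (n+1) * β j; ring)

lemma msab_finsum (t : Finset (Fin s)) (α : Fin s → ℕ) (β : Fin s → Fin s → ℕ) :
    ∑ i ∈ t, msab e (α i) (β i) = msab e (∑ i ∈ t, α i) (fun j => ∑ i ∈ t, β i j) := by
  classical
  induction t using Finset.induction with
  | empty => simp [msab_zero]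
  | insert _ _ h ih =>
    rw [Finset.sum_insert h, ih, msab_add]
    exact msab_congr (by rw [Finset.sum_insert h]) (fun j => by rw [Finset.sum_insert h]; rfl)

include hp hs hord hindep in
lemma extract (l : Multiset (Multiset G))
    (hl : ∀ A ∈ l, IsAtomSeq ({∑ i, e i} ∪ Set.range e : Set G) A) :
    ∃ a b u, l.sum = msab e a b ∧ a ≤ p * u ∧ (∀ i, p * u ≤ a + b i) ∧ u ≤ a ∧
      p * (Multiset.card l) + p * (s-1) * u = s * a + ∑ i, b i := by
  obtain ⟨σ, hσ⟩ : ∃ σ, s = σ + 1 := ⟨s - 1, by omega⟩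
  have hσZ : (s:ℤ) = (σ:ℤ) + 1 := by exact_mod_cast hσ
  have hσ' : s - 1 = σ := by omega
  rw [hσ']
  revert hl
  induction l using Multiset.induction with
  | empty =>
    intro _
    refine ⟨0, fun _ => 0, 0, ?_, by simp, fun i => by simp, le_refl _, by simp⟩
    simpa using (msab_zero (e := e)).symm
  | cons A l ih =>
    intro hl
    obtain ⟨a, b, u, hsum, h1, h2, h3, h4⟩ :=
      ih (fun A' hA' => hl A' (Multiset.mem_cons_of_mem hA'))
    have hA := hl A (Multiset.mem_cons_self A l)
    have hp2 : 2 ≤ p := hp.two_le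
    have hcard : ((Multiset.card (A ::ₘ l)) : ℤ) = (Multiset.card l : ℤ) + 1 := by
      rw [Multiset.card_cons]; push_cast; ring
    rcases atom_classify hp hs hord hindep hA with hA' | ⟨i, hA'⟩ | ⟨j, k, hj, hk, hjk, hA'⟩
    · -- U0
      refine ⟨a + p, b, u + 1, ?_, ?_, ?_, by omega, ?_⟩
      · rw [Multiset.sum_cons, hsum, hA', msab_add]
        exact msab_congr (by omega) (fun j => by rw [Pi.add_apply]; omega)
      · have hpu : p * (u+1) = p * u + p := by ring
        omega
      · intro i
        have h2i := h2 i
        have hpu : p * (u+1) = p * u + p := by ring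
        omega
      · zify at h4 ⊢
        rw [hcard]
        linear_combination h4 - (p:ℤ) * hσZ
    · -- Ui
      refine ⟨a, fun j => b j + (if j = i then p else 0), u, ?_, h1, ?_, h3, ?_⟩
      · rw [Multiset.sum_cons, hsum, hA', msab_add]
        exact msab_congr (by omega) (fun j => by rw [Pi.add_apply, Nat.add_comm])
      · intro j
        have := h2 j
        by_cases hji : j = i
        · simp only [if_pos hji]; omega
        · simp only [if_neg hji]; omega
      · have hsplit : ∑ j, (b j + (if j = i then p else 0)) = (∑ j, b j) + p := by
          rw [Finset.sum_add_distrib]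
          congr 1
          rw [Finset.sum_congr rfl (fun j _ => by
            rw [show (if j = i then p else 0) = (if i = j then p else 0) by
              rcases eq_or_ne j i with h | h
              · rw [h]
              · rw [if_neg h, if_neg (Ne.symm h)]]), Finset.sum_ite_eq]
          simp
        rw [hsplit]
        zify at h4 ⊢
        rw [hcard]
        linear_combination h4
    · -- V j k
      refine ⟨a + j, fun i => b i + k, u + 1, ?_, ?_, ?_, by omega, ?_⟩
      · rw [Multiset.sum_cons, hsum, hA', msab_add]
        exact msab_congr (by omega) (fun i => by rw [Pi.add_apply, Nat.add_comm])
      · have hpu : p * (u+1) = p * u + p := by ring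
        omega
      · intro i
        show p * (u + 1) ≤ a + j + (b i + k)
        have h2i := h2 i
        have hpu : p * (u+1) = p * u + p := by ring
        omega
      · have hsplit : ∑ i, (b i + k) = (∑ i, b i) + s * k := by
          rw [Finset.sum_add_distrib, Finset.sum_const, Finset.card_univ, Fintype.card_fin,
            smul_eq_mul]
        rw [hsplit]
        zify at h4 hjk ⊢
        rw [hcard]
        linear_combination h4 - (s:ℤ) * hjk - (p:ℤ) * hσZ

include hp hs hord hindep in
lemma construct {a : ℕ} {b : Fin s → ℕ} (hdvd : ∀ i, p ∣ a + b i) (u : ℕ)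
    (h1 : a ≤ p * u) (h2 : ∀ i, p * u ≤ a + b i) (h3 : u ≤ a) :
    ∃ ℓ ∈ LengthSet ({∑ i, e i} ∪ Set.range e : Set G) (msab e a b),
      p * ℓ + p * (s-1) * u = s * a + ∑ i, b i := by
  obtain ⟨σ, hσ⟩ : ∃ σ, s = σ + 1 := ⟨s - 1, by omega⟩
  have hσZ : (s:ℤ) = (σ:ℤ) + 1 := by exact_mod_cast hσ
  have hσ' : s - 1 = σ := by omega
  rw [hσ']
  have hp2 : 2 ≤ p := hp.two_le
  obtain ⟨W, hW⟩ := Nat.le.dest h1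
  have hx : ∀ i, ∃ xi, W + p * xi = b i := by
    intro i
    have hWb : W ≤ b i := by have := h2 i; omega
    have hd : p ∣ b i - W := by
      have h5 : p ∣ (a + b i) - (a + W) := Nat.dvd_sub (hdvd i) (hW ▸ dvd_mul_right p u)
      rwa [show (a + b i) - (a + W) = b i - W by omega] at h5
    obtain ⟨c, hc⟩ := hd
    exact ⟨c, by omega⟩
  choose x hxx using hx
  have hbsum : ∑ i, b i = s * W + p * ∑ i, x i := by
    rw [Finset.sum_congr rfl (fun i _ => (hxx i).symm), Finset.sum_add_distrib,
      Finset.sum_const, Finset.card_univ, Fintype.card_fin, smul_eq_mul, Finset.mul_sum]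
  rcases Nat.eq_zero_or_pos W with hW0 | hW1
  · -- W = 0 : only U-atoms
    subst hW0
    refine ⟨_, ⟨Multiset.replicate u (msab e p (fun _ => 0))
        + ∑ i, Multiset.replicate (x i) (msab e 0 (fun j => if j = i then p else 0)),
        rfl, ?_, ?_⟩, ?_⟩
    · intro A hA
      rw [Multiset.mem_add] at hA
      rcases hA with hA | hA
      · rw [Multiset.eq_of_mem_replicate hA]
        exact atom_U0 hp hs hord hindep
      · rw [Multiset.mem_sum] at hA
        obtain ⟨i, _, hA⟩ := hA
        rw [Multiset.eq_of_mem_replicate hA]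
        exact atom_Ui hp hs hord hindep i
    · rw [Multiset.sum_add, msab_rep, Multiset.sum_sum]
      rw [Finset.sum_congr rfl (fun i _ => msab_rep (x i) 0 _), msab_finsum, msab_add]
      refine msab_congr ?_ (fun j => ?_)
      · simp only [mul_zero, Finset.sum_const_zero, add_zero]
        have : u * p = p * u := by ring
        omega
      · show u * 0 + ∑ i, x i * (if j = i then p else 0) = b j
        simp only [mul_ite, mul_zero, Nat.zero_add]
        rw [Finset.sum_ite_eq, if_pos (Finset.mem_univ j)]
        have := hxx j
        have hcomm : x j * p = p * x j := by ring
        omega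
    · rw [Multiset.card_add, Multiset.card_replicate, card_finsum]
      rw [Finset.sum_congr rfl (fun i _ => Multiset.card_replicate _ _)]
      rw [hbsum]
      zify at hW ⊢
      linear_combination - (s:ℤ) * hW - (p:ℤ) * (u:ℤ) * hσZ
  · -- W ≥ 1 : V-atoms needed
    obtain ⟨q, hq⟩ : ∃ q, q + 1 = p := ⟨p - 1, by omega⟩
    have hq1 : 1 ≤ q := by omega
    obtain ⟨Z, r, hZr, hr1, hrq⟩ : ∃ Z r, q * Z + r = W ∧ 1 ≤ r ∧ r ≤ q := by
      refine ⟨(W - 1) / q, (W - 1) % q + 1, ?_, by omega, ?_⟩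
      · have := Nat.div_add_mod (W - 1) q
        omega
      · have := Nat.mod_lt (W - 1) (show 0 < q by omega)
        omega
    have hpu : p * u = q * u + u := by rw [← hq]; ring
    have hWqu : W ≤ q * u := by omega
    have hZu : Z + 1 ≤ u := by
      have hlt : q * Z < q * u := by omega
      have := Nat.lt_of_mul_lt_mul_left hlt
      omega
    obtain ⟨x₀, hx₀⟩ := Nat.le.dest hZu
    obtain ⟨j₀, hj₀⟩ : ∃ j₀, j₀ + r = p := ⟨p - r, by omega⟩
    have hj₀1 : 1 ≤ j₀ := by omega
    have ha_eq : x₀ * p + Z + j₀ = a := by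
      zify at hW hx₀ hZr hj₀ hq ⊢
      linear_combination -hW + (p:ℤ) * hx₀ - hZr + hj₀ + (Z:ℤ) * hq
    refine ⟨_, ⟨Multiset.replicate x₀ (msab e p (fun _ => 0))
        + ∑ i, Multiset.replicate (x i) (msab e 0 (fun j => if j = i then p else 0))
        + Multiset.replicate Z (msab e 1 (fun _ => q))
        + Multiset.replicate 1 (msab e j₀ (fun _ => r)),
        rfl, ?_, ?_⟩, ?_⟩
    · intro A hA
      rw [Multiset.mem_add, Multiset.mem_add, Multiset.mem_add] at hA
      rcases hA with ((hA | hA) | hA) | hA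
      · rw [Multiset.eq_of_mem_replicate hA]
        exact atom_U0 hp hs hord hindep
      · rw [Multiset.mem_sum] at hA
        obtain ⟨i, _, hA⟩ := hA
        rw [Multiset.eq_of_mem_replicate hA]
        exact atom_Ui hp hs hord hindep i
      · rw [Multiset.eq_of_mem_replicate hA]
        exact atom_V hp hs hord hindep 1 q le_rfl hq1 (by omega)
      · rw [Multiset.eq_of_mem_replicate hA]
        exact atom_V hp hs hord hindep j₀ r hj₀1 (by omega) hj₀
    · rw [Multiset.sum_add, Multiset.sum_add, Multiset.sum_add, msab_rep, msab_rep, msab_rep,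
        Multiset.sum_sum]
      rw [Finset.sum_congr rfl (fun i _ => msab_rep (x i) 0 _), msab_finsum, msab_add,
        msab_add, msab_add]
      refine msab_congr ?_ (fun j => ?_)
      · show x₀ * p + (∑ i, x i * 0) + Z * 1 + 1 * j₀ = a
        simp only [mul_zero, Finset.sum_const_zero, add_zero, mul_one, one_mul]
        omega
      · show x₀ * 0 + (∑ i, x i * (if j = i then p else 0)) + Z * q + 1 * r = b j
        simp only [mul_ite, mul_zero, Nat.zero_add, one_mul]
        rw [Finset.sum_ite_eq, if_pos (Finset.mem_univ j)]
        zify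
        zify at hZr
        have := hxx j
        zify at this
        linear_combination this + hZr
    · rw [Multiset.card_add, Multiset.card_add, Multiset.card_add, Multiset.card_replicate,
        Multiset.card_replicate, Multiset.card_replicate, card_finsum]
      rw [Finset.sum_congr rfl (fun i _ => Multiset.card_replicate _ _)]
      rw [hbsum]
      zify at hW hx₀ hZr hj₀ hq ha_eq ⊢
      linear_combination (s:ℤ) * ha_eq - (p:ℤ) * (σ:ℤ) * hx₀ + (s:ℤ) * hZr - (s:ℤ) * hj₀
        - (s:ℤ) * (Z:ℤ) * hq - (p:ℤ) * ((x₀:ℤ) + (Z:ℤ) + 1) * hσZ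

end factorizations

section delta

variable (hp : p.Prime) (hs : 2 ≤ s)
  (hord : ∀ i, addOrderOf (e i) = p)
  (hindep : ∀ f : Fin s → ℤ, (∑ i, f i • e i) = 0 → ∀ i, f i • e i = 0)

lemma deltaOf_nonempty {L : Set ℕ} {x y : ℕ} (hx : x ∈ L) (hy : y ∈ L) (hxy : x < y) :
    (DeltaOf L).Nonempty := by
  have hne : {z | z ∈ L ∧ x < z}.Nonempty := ⟨y, hy, hxy⟩
  obtain ⟨hy₀L, hy₀x⟩ := Nat.sInf_mem hne
  have hmem : (sInf {z | z ∈ L ∧ x < z} - x) ∈ DeltaOf L := by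
    refine ⟨x, hx, sInf {z | z ∈ L ∧ x < z}, hy₀L, hy₀x, rfl, ?_⟩
    rintro z hz ⟨hz1, hz2⟩
    exact absurd (Nat.sInf_le ((show z ∈ {z | z ∈ L ∧ x < z} from ⟨hz, hz1⟩))) (not_le.2 hz2)
  exact ⟨_, hmem⟩

include hp hs hord hindep in
lemma delta_eq_of_mem {B : Multiset G}
    (hzs : IsZeroSumSeq ({∑ i, e i} ∪ Set.range e : Set G) B) {d : ℕ}
    (hd : d ∈ DeltaOf (LengthSet ({∑ i, e i} ∪ Set.range e : Set G) B)) : d = s - 1 := by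
  obtain ⟨xℓ, hxL, yℓ, hyL, hxy, rfl, hmid⟩ := hd
  obtain ⟨hmem, hsum⟩ := hzs
  have hrepr := eq_msab hp hs hord hindep hmem
  set a := count (∑ i, e i) B with ha_def
  set b := (fun i => count (e i) B) with hb_def
  have hdvd : ∀ i, p ∣ a + b i := by
    refine (msab_sum_zero_iff hp hord hindep).1 ?_
    rw [← hrepr]; exact hsum
  have hp2 : 2 ≤ p := hp.two_le
  obtain ⟨σ, hσ⟩ : ∃ σ, s = σ + 1 := ⟨s - 1, by omega⟩
  have hσ1 : 1 ≤ σ := by omega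
  have hσ' : s - 1 = σ := by omega
  rw [hσ']
  -- extract data from the two factorizations
  obtain ⟨lx, hlxc, hlxa, hlxs⟩ := hxL
  obtain ⟨a1, b1, ux, hx1, hx2, hx3, hx4, hx5⟩ := extract hp hs hord hindep lx hlxa
  obtain ⟨ha1, hb1⟩ := msab_inj hp hs hord hindep (show msab e a1 b1 = msab e a b by
    rw [← hx1, hlxs, hrepr])
  rw [ha1] at hx2 hx3 hx4 hx5
  rw [hb1] at hx3 hx5
  rw [hlxc, hσ'] at hx5
  obtain ⟨ly, hlyc, hlya, hlys⟩ := hyL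
  obtain ⟨a2, b2, uy, hy1, hy2, hy3, hy4, hy5⟩ := extract hp hs hord hindep ly hlya
  obtain ⟨ha2, hb2⟩ := msab_inj hp hs hord hindep (show msab e a2 b2 = msab e a b by
    rw [← hy1, hlys, hrepr])
  rw [ha2] at hy2 hy3 hy4 hy5
  rw [hb2] at hy3 hy5
  rw [hlyc, hσ'] at hy5
  have hkey : p * xℓ + p * σ * ux = p * yℓ + p * σ * uy := by rw [hx5, hy5]
  have hpσ : 0 < p * σ := Nat.mul_pos (by omega) (by omega)
  have huxy : uy < ux := by
    by_contra hcon
    push_neg at hcon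
    have hmle : p * σ * ux ≤ p * σ * uy := Nat.mul_le_mul_left _ hcon
    have hmlt : p * xℓ < p * yℓ := (Nat.mul_lt_mul_left (show 0 < p by omega)).2 hxy
    omega
  rcases eq_or_lt_of_le (show uy + 1 ≤ ux by omega) with heq | hlt
  · have hr1 : p * σ * ux = p * σ * uy + p * σ := by rw [← heq]; ring
    have hr2 : p * (xℓ + σ) = p * xℓ + p * σ := by ring
    have hr3 : p * (xℓ + σ) = p * yℓ := by omega
    have := Nat.eq_of_mul_eq_mul_left (show 0 < p by omega) hr3
    omega
  · exfalso
    have hcond1 : a ≤ p * (uy + 1) := le_trans hy2 (Nat.mul_le_mul_left p (by omega))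
    have hcond2 : ∀ i, p * (uy + 1) ≤ a + b i := fun i =>
      le_trans (Nat.mul_le_mul_left p (by omega : uy + 1 ≤ ux)) (hx3 i)
    have hcond3 : uy + 1 ≤ a := le_trans (by omega) hx4
    obtain ⟨z, hzL, hz5⟩ := construct hp hs hord hindep hdvd (uy + 1) hcond1 hcond2 hcond3
    rw [hσ'] at hz5
    rw [← hrepr] at hzL
    have hr1 : p * σ * (uy + 1) = p * σ * uy + p * σ := by ring
    have hzy : z < yℓ := by
      refine Nat.lt_of_mul_lt_mul_left (a := p) ?_
      omega
    have hxz : xℓ < z := by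
      have hm2 : p * σ * (uy + 2) ≤ p * σ * ux := Nat.mul_le_mul_left _ (by omega)
      have hr2 : p * σ * (uy + 2) = p * σ * uy + p * σ + p * σ := by ring
      refine Nat.lt_of_mul_lt_mul_left (a := p) ?_
      omega
    exact hmid z hzL ⟨hxz, hzy⟩

include hp hs hord hindep in
lemma deltaSet_eq' :
    DeltaSet ({∑ i, e i} ∪ Set.range e : Set G) = {s - 1} := by
  have hp2 : 2 ≤ p := hp.two_le
  ext d
  simp only [Set.mem_singleton_iff]
  constructor
  · rintro ⟨B, hzs, hB0, hd⟩
    exact delta_eq_of_mem hp hs hord hindep hzs hd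
  · rintro rfl
    have hdvd : ∀ i : Fin s, p ∣ p + (fun _ : Fin s => p) i := fun i => ⟨2, by show p + p = p * 2; ring⟩
    have hzs : IsZeroSumSeq ({∑ i, e i} ∪ Set.range e : Set G) (msab e p (fun _ => p)) :=
      (isZeroSum_msab_iff hp hs hord hindep).2 hdvd
    have hne0 : msab e p (fun _ : Fin s => p) ≠ 0 := by
      intro h
      exact absurd ((msab_eq_zero_iff hp hs hord hindep).1 h).1 (by omega)
    obtain ⟨ℓ₁, hℓ₁L, hℓ₁⟩ := construct hp hs hord hindep hdvd 1 (by omega)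
      (fun i => by show p * 1 ≤ p + p; omega) (by omega)
    obtain ⟨ℓ₂, hℓ₂L, hℓ₂⟩ := construct hp hs hord hindep hdvd 2 (by omega)
      (fun i => by show p * 2 ≤ p + p; omega) (by omega)
    have hr1 : p * (s-1) * 1 = p * (s-1) := by ring
    have hr2 : p * (s-1) * 2 = p * (s-1) + p * (s-1) := by ring
    have hpσ : 0 < p * (s-1) := Nat.mul_pos (by omega) (by omega)
    have hlt : ℓ₂ < ℓ₁ := by
      refine Nat.lt_of_mul_lt_mul_left (a := p) ?_
      omega
    obtain ⟨d', hd'⟩ := deltaOf_nonempty hℓ₂L hℓ₁L hlt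
    have hd'eq := delta_eq_of_mem hp hs hord hindep hzs hd'
    exact ⟨msab e p (fun _ => p), hzs, hne0, hd'eq ▸ hd'⟩

end delta

end S3

/-- Main lemma, without decidability or generation hypotheses. -/
theorem S3.deltaSet_main {G : Type*} [AddCommGroup G] {p s : ℕ} (hp : p.Prime) (hs : 2 ≤ s)
    {e : Fin s → G} (hord : ∀ i, addOrderOf (e i) = p)
    (hindep : ∀ f : Fin s → ℤ, (∑ i, f i • e i) = 0 → ∀ i, f i • e i = 0) :
    DeltaSet ({∑ i, e i} ∪ Set.range e : Set G) = {s - 1} := by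
  classical
  exact S3.deltaSet_eq' hp hs hord hindep

theorem S3.part2 (H : Type*) [AddCommGroup H] [Fintype H] (hr : 2 ≤ rankG H) :
    Set.Icc 1 (rankG H - 1) ⊆ DeltaStar H := by
  classical
  intro d hd
  obtain ⟨hd1, hd2⟩ := hd
  have hRne : {r : ℕ | ∃ p : ℕ, p.Prime ∧ r = pRank H p}.Nonempty :=
    ⟨pRank H 2, 2, Nat.prime_two, rfl⟩
  have hRbdd : BddAbove {r : ℕ | ∃ p : ℕ, p.Prime ∧ r = pRank H p} := by
    refine ⟨Nat.log 2 (Nat.card H), ?_⟩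
    rintro r ⟨p, hp, rfl⟩
    calc pRank H p = Nat.log p (Nat.card {x : H // p • x = 0}) := rfl
      _ ≤ Nat.log 2 (Nat.card {x : H // p • x = 0}) :=
          Nat.log_anti_left (by norm_num) hp.two_le
      _ ≤ Nat.log 2 (Nat.card H) :=
          Nat.log_mono_right (Nat.card_le_card_of_injective _ Subtype.coe_injective)
  obtain ⟨p, hp, hpr⟩ := Nat.sSup_mem hRne hRbdd
  have hpr' : rankG H = pRank H p := hpr
  haveI : Fact p.Prime := ⟨hp⟩
  haveI : NeZero p := ⟨hp.ne_zero⟩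
  let T : AddSubgroup H :=
    { carrier := {x | p • x = 0}
      add_mem' := by
        intro a b ha hb
        simp only [Set.mem_setOf_eq] at *
        rw [smul_add, ha, hb, add_zero]
      zero_mem' := by simp
      neg_mem' := by
        intro a ha
        simp only [Set.mem_setOf_eq] at *
        rw [smul_neg, ha, neg_zero] }
  have hT0 : ∀ x : T, p • x = 0 := by
    intro x
    refine Subtype.ext ?_
    rw [show ((p • x : T) : H) = p • (x : H) from map_nsmul T.subtype p x]
    exact x.2
  haveI : Module (ZMod p) T := AddCommGroup.zmodModule hT0
  haveI : Module.Finite (ZMod p) T := inferInstance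
  have hcard : Nat.card {x : H // p • x = 0} = p ^ (Module.finrank (ZMod p) T) := by
    have h1 : Nat.card T = p ^ (Module.finrank (ZMod p) T) := by
      haveI : Fintype T := Fintype.ofFinite _
      rw [Nat.card_eq_fintype_card, Module.card_eq_pow_finrank (K := ZMod p) (V := T)]
      congr 1
      rw [← Nat.card_eq_fintype_card, Nat.card_zmod]
    exact (Nat.card_congr (Equiv.subtypeEquivRight (fun x => Iff.rfl))).trans h1
  have hn : pRank H p = Module.finrank (ZMod p) T := by
    show Nat.log p (Nat.card {x : H // p • x = 0}) = _
    rw [hcard, Nat.log_pow hp.one_lt]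
  have hsn : d + 1 ≤ Module.finrank (ZMod p) T := by omega
  let bT := Module.finBasis (ZMod p) T
  let v : Fin (d+1) → T := fun i => bT (Fin.castLE hsn i)
  let e : Fin (d+1) → H := fun i => (v i : H)
  have hord : ∀ i, addOrderOf (e i) = p := by
    intro i
    have hdvd : addOrderOf (e i) ∣ p :=
      addOrderOf_dvd_iff_nsmul_eq_zero.2 ((v i).2 : p • (e i) = 0)
    rcases (Nat.Prime.eq_one_or_self_of_dvd hp _ hdvd) with h | h
    · exfalso
      have hne : e i ≠ 0 := by
        intro h0
        exact Module.Basis.ne_zero bT (Fin.castLE hsn i) (Subtype.coe_injective h0)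
      have h1 := addOrderOf_nsmul_eq_zero (e i)
      rw [h, one_nsmul] at h1
      exact hne h1
    · exact h
  have hindep : ∀ f : Fin (d+1) → ℤ, (∑ i, f i • e i) = 0 → ∀ i, f i • e i = 0 := by
    intro f hf i
    have hsum : ((∑ i, f i • v i : T) : H) = 0 := by
      rw [show ((∑ i, f i • v i : T) : H) = ∑ i, f i • (v i : H) from
        (map_sum T.subtype _ _).trans
          (Finset.sum_congr rfl (fun j _ => map_zsmul T.subtype (f j) (v j)))]
      exact hf
    have h0 : (∑ i, f i • v i : T) = 0 := Subtype.coe_injective hsum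
    have h1 : ∑ i, ((f i : ZMod p)) • v i = 0 := by
      rw [Finset.sum_congr rfl (fun j _ => Int.cast_smul_eq_zsmul (ZMod p) (f j) (v j))]
      exact h0
    have hli : LinearIndependent (ZMod p) v :=
      (bT.linearIndependent).comp _ (Fin.castLE_injective hsn)
    have hz := (Fintype.linearIndependent_iff.1 hli) (fun i => (f i : ZMod p)) h1 i
    have h2 : f i • v i = 0 := by
      rw [← Int.cast_smul_eq_zsmul (ZMod p) (f i) (v i), hz, zero_smul]
    have h3 : f i • e i = ((f i • v i : T) : H) := (map_zsmul T.subtype (f i) (v i)).symm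
    rw [h3, h2]
    rfl
  have hDS := S3.deltaSet_main hp (by omega : 2 ≤ d + 1) hord hindep
  refine ⟨({∑ i, e i} ∪ Set.range e : Set H), ?_, ?_⟩
  · rw [hDS]
    exact Set.singleton_nonempty _
  · rw [hDS, csInf_singleton]
    omega

/-- For a basis `(e₁,…,e_s)` of `G = C_p^s` with `p` prime and `s ≥ 2`,
setting `e₀ = e₁ + … + e_s` and `G₀ = {e₀, e₁, …, e_s}`, one has `Δ(G₀) = {s-1}`.
Consequently, every finite abelian group `H` with `r(H) ≥ 2` satisfies
`[1, r(H) − 1] ⊆ Δ*(H)`. -/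
theorem stmt_3 {G : Type*} [AddCommGroup G] [Fintype G] (p s : ℕ) (hp : p.Prime)
    (hs : 2 ≤ s) (e : Fin s → G)
    (hord : ∀ i, addOrderOf (e i) = p)
    (hindep : ∀ f : Fin s → ℤ, (∑ i, f i • e i) = 0 → ∀ i, f i • e i = 0)
    (hgen : AddSubgroup.closure (Set.range e) = ⊤) :
    DeltaSet (({∑ i, e i} ∪ Set.range e : Set G)) = {s - 1} ∧
    (∀ (H : Type*) [AddCommGroup H] [Fintype H], 2 ≤ rankG H →
      Set.Icc 1 (rankG H - 1) ⊆ DeltaStar H) := by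
  refine ⟨S3.deltaSet_main hp hs hord hindep, ?_⟩
  intro H _ _ hr
  exact S3.part2 H hr
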